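/- arXiv:1605.06420 — 2 statements merged into one kernel-verified Lean document; each statement's English description precedes it below -/
import Mathlib

section
/- Let b, b̃ : ℝᵈ → ℝᵈ satisfy ‖b(x) − b̃(x)‖₂ ≤ ε for all x, with b = ∇log π and b̃ = ∇log π̃ for probability densities π, π̃ ∈ C¹(ℝᵈ). Suppose there exist R, B, δ > 0 such that ‖b(x) − b̃(x)‖₂ ≤ B/‖x‖₂^{1+δ} whenever ‖x‖₂ > R, and there exists x* with π(x*) = π̃(x*). Then there is a constant B̃ > 0 such that |log π(x) − log π̃(x)| ≤ B̃ for all x ∈ ℝᵈ. -/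
/-- If the score functions of two positive `C¹` probability densities are uniformly
`ε`-close, decay at rate `B/‖x‖^{1+δ}` outside a ball of radius `R`, and the densities
agree at some point `x*`, then the log-densities are uniformly close. -/
theorem log_density_uniformly_close_of_score_close
    {d : ℕ} (p pt : EuclideanSpace ℝ (Fin d) → ℝ)
    (hp : ContDiff ℝ 1 p) (hpt : ContDiff ℝ 1 pt)
    (hppos : ∀ x, 0 < p x) (hptpos : ∀ x, 0 < pt x)
    (hpint : ∫ x, p x = 1) (hptint : ∫ x, pt x = 1)
    (b bt : EuclideanSpace ℝ (Fin d) → EuclideanSpace ℝ (Fin d))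
    (hb : ∀ x, b x = gradient (fun y => Real.log (p y)) x)
    (hbt : ∀ x, bt x = gradient (fun y => Real.log (pt y)) x)
    (ε : ℝ) (hε : 0 < ε) (hclose : ∀ x, ‖b x - bt x‖ ≤ ε)
    (R B δ : ℝ) (hR : 0 < R) (hB : 0 < B) (hδ : 0 < δ)
    (hdecay : ∀ x, R < ‖x‖ → ‖b x - bt x‖ ≤ B / ‖x‖ ^ (1 + δ))
    (xstar : EuclideanSpace ℝ (Fin d)) (hxstar : p xstar = pt xstar) :
    ∃ Bt : ℝ, 0 < Bt ∧ ∀ x, |Real.log (p x) - Real.log (pt x)| ≤ Bt := by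
  set g : EuclideanSpace ℝ (Fin d) → ℝ :=
    fun y => Real.log (p y) - Real.log (pt y) with hg_def
  have hlogp : ContDiff ℝ 1 fun y => Real.log (p y) := hp.log fun y => (hppos y).ne'
  have hlogpt : ContDiff ℝ 1 fun y => Real.log (pt y) := hpt.log fun y => (hptpos y).ne'
  have hg : ContDiff ℝ 1 g := hlogp.sub hlogpt
  have hgd : Differentiable ℝ g := hg.differentiable one_ne_zero
  -- norm of the derivative of g equals the norm of the score difference
  have hfnorm : ∀ x, ‖fderiv ℝ g x‖ = ‖b x - bt x‖ := by
    intro x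
    have h1 : DifferentiableAt ℝ (fun y => Real.log (p y)) x :=
      (hlogp.differentiable one_ne_zero) x
    have h2 : DifferentiableAt ℝ (fun y => Real.log (pt y)) x :=
      (hlogpt.differentiable one_ne_zero) x
    have hf : fderiv ℝ g x =
        fderiv ℝ (fun y => Real.log (p y)) x - fderiv ℝ (fun y => Real.log (pt y)) x :=
      fderiv_sub h1 h2
    rw [hb, hbt]
    simp only [gradient]
    rw [← map_sub, ← hf, LinearIsometryEquiv.norm_map]
  have hεb : ∀ x, ‖fderiv ℝ g x‖ ≤ ε := fun x => (hfnorm x) ▸ hclose x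
  have hdb : ∀ x, R < ‖x‖ → ‖fderiv ℝ g x‖ ≤ B / ‖x‖ ^ (1 + δ) :=
    fun x hx => (hfnorm x) ▸ hdecay x hx
  -- global ε-Lipschitz estimate
  have hlip : ∀ x y : EuclideanSpace ℝ (Fin d), |g x - g y| ≤ ε * ‖x - y‖ := by
    intro x y
    have := convex_univ.norm_image_sub_le_of_norm_fderiv_le
      (f := g) (C := ε) (fun z _ => hgd z) (fun z _ => hεb z)
      (Set.mem_univ y) (Set.mem_univ x)
    simpa [Real.norm_eq_abs] using this
  set R' : ℝ := R + 1 with hR'_def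
  have hR' : 0 < R' := by positivity
  have hRR' : R < R' := by simp [hR'_def]
  set C1 : ℝ := ε * (R' + ‖xstar‖) with hC1_def
  set C2 : ℝ := B / (δ * R' ^ δ) with hC2_def
  have hC1 : 0 < C1 := by
    have : 0 < R' + ‖xstar‖ := lt_of_lt_of_le hR' (le_add_of_nonneg_right (norm_nonneg _))
    positivity
  have hC2 : 0 < C2 := by
    have : (0:ℝ) < R' ^ δ := Real.rpow_pos_of_pos hR' δ
    positivity
  have hgstar : g xstar = 0 := by simp [hg_def, hxstar]
  refine ⟨C1 + C2, by positivity, fun x => ?_⟩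
  show |g x| ≤ C1 + C2
  -- near estimate : for any y with ‖y‖ ≤ R', |g y| ≤ C1
  have hnear : ∀ y : EuclideanSpace ℝ (Fin d), ‖y‖ ≤ R' → |g y| ≤ C1 := by
    intro y hy
    have h1 : |g y - g xstar| ≤ ε * ‖y - xstar‖ := hlip y xstar
    have h2 : ‖y - xstar‖ ≤ R' + ‖xstar‖ :=
      (norm_sub_le _ _).trans (add_le_add_left hy _)
    calc |g y| = |g y - g xstar| := by rw [hgstar, sub_zero]
      _ ≤ ε * ‖y - xstar‖ := h1
      _ ≤ ε * (R' + ‖xstar‖) := by nlinarith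
  by_cases hx : ‖x‖ ≤ R'
  · exact (hnear x hx).trans (le_add_of_nonneg_right hC2.le)
  push_neg at hx
  set s : ℝ := ‖x‖ with hs_def
  have hs : R' < s := hx
  have hs0 : 0 < s := lt_trans hR' hs
  set u : EuclideanSpace ℝ (Fin d) := s⁻¹ • x with hu_def
  have hu : ‖u‖ = 1 := by
    rw [hu_def, norm_smul, norm_inv, Real.norm_eq_abs, abs_of_pos hs0]
    field_simp
    rfl
  have hxu : x = s • u := by rw [hu_def, smul_inv_smul₀ hs0.ne']
  have htu : ∀ t : ℝ, 0 ≤ t → ‖t • u‖ = t := by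
    intro t ht
    rw [norm_smul, hu, Real.norm_eq_abs, abs_of_nonneg ht, mul_one]
  -- the radial function
  set φ : ℝ → ℝ := fun t => g (t • u) with hφ_def
  set φ' : ℝ → ℝ := fun t => (fderiv ℝ g (t • u)) u with hφ'_def
  have hderiv : ∀ t : ℝ, HasDerivAt φ (φ' t) t := by
    intro t
    have h1 : HasDerivAt (fun t : ℝ => t • u) u t := by
      simpa using (hasDerivAt_id t).smul_const u
    exact (hgd (t • u)).hasFDerivAt.comp_hasDerivAt t h1
  have hφ'cont : Continuous φ' := by
    have h1 : Continuous fun t : ℝ => fderiv ℝ g (t • u) :=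
      (hg.continuous_fderiv one_ne_zero).comp (continuous_id.smul continuous_const)
    exact h1.clm_apply continuous_const
  -- FTC along the ray
  have hFTC : ∫ t in R'..s, φ' t = φ s - φ R' :=
    intervalIntegral.integral_eq_sub_of_hasDerivAt (fun t _ => hderiv t)
      (hφ'cont.intervalIntegrable _ _)
  -- pointwise bound for φ' on the interval
  have hbound : ∀ t ∈ Set.uIoc R' s, ‖φ' t‖ ≤ B * t ^ (-(1 + δ)) := by
    intro t ht
    rw [Set.uIoc_of_le hs.le] at ht
    have ht1 : R' < t := ht.1
    have ht0 : 0 < t := lt_trans hR' ht1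
    have hnt : ‖t • u‖ = t := htu t ht0.le
    have hRt : R < ‖t • u‖ := by rw [hnt]; exact lt_trans hRR' ht1
    have h2 : ‖fderiv ℝ g (t • u)‖ ≤ B / t ^ (1 + δ) := by
      have := hdb (t • u) hRt
      rwa [hnt] at this
    calc ‖φ' t‖ ≤ ‖fderiv ℝ g (t • u)‖ * ‖u‖ := (fderiv ℝ g (t • u)).le_opNorm u
      _ = ‖fderiv ℝ g (t • u)‖ := by rw [hu, mul_one]
      _ ≤ B / t ^ (1 + δ) := h2
      _ = B * t ^ (-(1 + δ)) := by
          rw [Real.rpow_neg ht0.le, div_eq_mul_inv]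
  have hbint : IntervalIntegrable (fun t : ℝ => B * t ^ (-(1 + δ))) MeasureTheory.volume R' s := by
    apply ContinuousOn.intervalIntegrable
    intro t ht
    rw [Set.uIcc_of_le hs.le] at ht
    have ht0 : 0 < t := lt_of_lt_of_le hR' ht.1
    exact (continuousAt_const.mul
      (Real.continuousAt_rpow_const t _ (Or.inl ht0.ne'))).continuousWithinAt
  -- compute the integral of the bound
  have hval : ∫ t in R'..s, B * t ^ (-(1 + δ)) ≤ C2 := by
    rw [intervalIntegral.integral_const_mul]
    have h0 : (0:ℝ) ∉ Set.uIcc R' s := by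
      rw [Set.uIcc_of_le hs.le]
      intro h
      exact absurd h.1 (not_le.mpr hR')
    have hne : -(1 + δ) ≠ -1 := by intro h; nlinarith [neg_injective h]
    rw [integral_rpow (Or.inr ⟨hne, h0⟩)]
    have hexp : -(1 + δ) + 1 = -δ := by ring
    rw [hexp]
    have hRp : (0:ℝ) < R' ^ δ := Real.rpow_pos_of_pos hR' δ
    have hsp : (0:ℝ) < s ^ (-δ) := Real.rpow_pos_of_pos hs0 _
    have hRneg : R' ^ (-δ) = (R' ^ δ)⁻¹ := Real.rpow_neg hR'.le δ
    have hRpne : (R' ^ δ) ≠ 0 := hRp.ne'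
    have hδne : δ ≠ 0 := hδ.ne'
    calc B * ((s ^ (-δ) - R' ^ (-δ)) / (-δ)) = B * ((R' ^ (-δ) - s ^ (-δ)) / δ) := by
          rw [div_neg, ← neg_div, neg_sub]
      _ ≤ B * (R' ^ (-δ) / δ) := by
          refine mul_le_mul_of_nonneg_left ((div_le_div_iff_of_pos_right hδ).mpr ?_) hB.le
          linarith
      _ = C2 := by
          rw [hC2_def, hRneg, div_eq_mul_inv, ← mul_inv, mul_comm (R' ^ δ) δ,
            ← div_eq_mul_inv]
  -- combine
  have hray : |g x - g (R' • u)| ≤ C2 := by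
    have h1 : |∫ t in R'..s, φ' t| ≤ |∫ t in R'..s, B * t ^ (-(1 + δ))| := by
      have := intervalIntegral.norm_integral_le_of_norm_le
        (f := φ') (g := fun t => B * t ^ (-(1 + δ))) (μ := MeasureTheory.volume)
        (a := R') (b := s) hs.le ?_ hbint
      · rw [Real.norm_eq_abs] at this; exact this.trans (le_abs_self _)
      · exact Filter.Eventually.of_forall (fun t ht => hbound t (by rwa [Set.uIoc_of_le hs.le]))
    have h2 : |∫ t in R'..s, B * t ^ (-(1 + δ))| ≤ C2 := by
      rw [abs_of_nonneg]
      · exact hval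
      · apply intervalIntegral.integral_nonneg hs.le
        intro t ht
        have ht0 : 0 < t := lt_of_lt_of_le hR' ht.1
        positivity
    have h3 : g x - g (R' • u) = φ s - φ R' := by
      rw [hφ_def]; simp only []; rw [hxu]
    rw [h3, ← hFTC]
    exact h1.trans h2
  have hRu : ‖(R' : ℝ) • u‖ ≤ R' := by rw [htu R' hR'.le]
  calc |g x| = |(g x - g (R' • u)) + g (R' • u)| := by ring_nf
    _ ≤ |g x - g (R' • u)| + |g (R' • u)| := abs_add_le _ _
    _ ≤ C2 + C1 := add_le_add hray (hnear _ hRu)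
    _ = C1 + C2 := by ring
end

section
/- Let b̃ : ℝᵈ → ℝᵈ satisfy ‖b(x) − b̃(x)‖₂ ≤ ε/2 for all x, and define f_R(x) = −(εx)/(2‖x‖₂) · ((2‖x‖₂/R − 1)·1[R/2 ≤ ‖x‖₂ < R] + 1[‖x‖₂ ≥ R]) (with f_R(0) = 0). Let b̃_R(x) = b̃(x) + ∇f_R(x) wherever defined. Then ‖b(x) − b̃_R(x)‖₂ ≤ ε for all x, and for all x with ‖x‖₂ > R, x · (b(x) − b̃_R(x)) ≥ 0. -/
open scoped RealInnerProductSpace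

/-- Modifying an `ε/2`-accurate drift approximation `b̃` by the vector field
`f_R(x) = -(εx)/(2‖x‖) ((2‖x‖/R - 1)·1[R/2 ≤ ‖x‖ < R] + 1[‖x‖ ≥ R])` yields a drift
`b̃_R = b̃ + f_R` that is `ε`-accurate and satisfies `x ⬝ (b(x) - b̃_R(x)) ≥ 0` for
`‖x‖ > R`. -/
theorem modified_drift_condition_two
    {d : ℕ} (b bt : EuclideanSpace ℝ (Fin d) → EuclideanSpace ℝ (Fin d))
    (ε R : ℝ) (hε : 0 < ε) (hR : 0 < R)
    (hbt : ∀ x, ‖b x - bt x‖ ≤ ε / 2)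
    (fR btR : EuclideanSpace ℝ (Fin d) → EuclideanSpace ℝ (Fin d))
    (hfR : ∀ x, fR x =
      (-(ε * ((if R / 2 ≤ ‖x‖ ∧ ‖x‖ < R then 2 * ‖x‖ / R - 1 else 0)
        + (if R ≤ ‖x‖ then (1:ℝ) else 0))) / (2 * ‖x‖)) • x)
    (hbtR : ∀ x, btR x = bt x + fR x) :
    (∀ x, ‖b x - btR x‖ ≤ ε) ∧
    (∀ x, R < ‖x‖ → 0 ≤ ⟪x, b x - btR x⟫) := by
  constructor
  · intro x
    rw [hbtR, hfR]
    set g : ℝ := (if R / 2 ≤ ‖x‖ ∧ ‖x‖ < R then 2 * ‖x‖ / R - 1 else 0)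
        + (if R ≤ ‖x‖ then (1:ℝ) else 0) with hg
    have hg0 : 0 ≤ g := by
      rw [hg]
      split_ifs with h1 h2 h2
      · have h3 : 1 ≤ 2 * ‖x‖ / R := (one_le_div hR).mpr (by linarith [h1.1])
        linarith
      · have h3 : 1 ≤ 2 * ‖x‖ / R := (one_le_div hR).mpr (by linarith [h1.1])
        linarith
      · norm_num
      · norm_num
    have hg1 : g ≤ 1 := by
      rw [hg]
      split_ifs with h1 h2 h2
      · exact absurd h2 (not_le.mpr h1.2)
      · have h3 : 2 * ‖x‖ / R ≤ 2 := (div_le_iff₀ hR).mpr (by linarith [h1.2])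
        linarith
      · norm_num
      · norm_num
    have key : b x - (bt x + (-(ε * g) / (2 * ‖x‖)) • x)
        = (b x - bt x) - (-(ε * g) / (2 * ‖x‖)) • x := by abel
    rw [key]
    have hnorm : ‖(-(ε * g) / (2 * ‖x‖)) • x‖ ≤ ε / 2 := by
      rw [norm_smul]
      rcases eq_or_ne ‖x‖ 0 with h0 | h0
      · rw [h0]; simp; positivity
      · have hx0 : 0 < ‖x‖ := lt_of_le_of_ne (norm_nonneg _) (Ne.symm h0)
        rw [Real.norm_eq_abs, abs_div, abs_neg, abs_of_nonneg (by positivity : (0:ℝ) ≤ ε * g),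
          abs_of_pos (by positivity : (0:ℝ) < 2 * ‖x‖)]
        rw [div_mul_eq_mul_div, div_le_iff₀ (by positivity)]
        calc ε * g * ‖x‖ ≤ ε * 1 * ‖x‖ := by gcongr
          _ = ε / 2 * (2 * ‖x‖) := by ring
    calc ‖(b x - bt x) - (-(ε * g) / (2 * ‖x‖)) • x‖
        ≤ ‖b x - bt x‖ + ‖(-(ε * g) / (2 * ‖x‖)) • x‖ := norm_sub_le _ _
      _ ≤ ε / 2 + ε / 2 := add_le_add (hbt x) hnorm
      _ = ε := by ring
  · intro x hx
    have hx0 : 0 < ‖x‖ := lt_trans hR hx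
    have h1 : ¬(R / 2 ≤ ‖x‖ ∧ ‖x‖ < R) := by
      rintro ⟨-, h⟩; exact absurd hx (not_lt.mpr h.le)
    have h2 : R ≤ ‖x‖ := hx.le
    rw [hbtR, hfR, if_neg h1, if_pos h2]
    have key : b x - (bt x + (-(ε * (0 + 1)) / (2 * ‖x‖)) • x)
        = (b x - bt x) + (ε / (2 * ‖x‖)) • x := by
      have : (-(ε * (0 + 1)) / (2 * ‖x‖)) = -(ε / (2 * ‖x‖)) := by ring
      rw [this, neg_smul]; abel
    rw [key, inner_add_right, real_inner_smul_right, real_inner_self_eq_norm_sq]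
    have hcs : |⟪x, b x - bt x⟫| ≤ ‖x‖ * (ε / 2) := by
      calc |⟪x, b x - bt x⟫| ≤ ‖x‖ * ‖b x - bt x‖ := abs_real_inner_le_norm _ _
        _ ≤ ‖x‖ * (ε / 2) := by
            exact mul_le_mul_of_nonneg_left (hbt x) (norm_nonneg _)
    have hlow : -(‖x‖ * (ε / 2)) ≤ ⟪x, b x - bt x⟫ := neg_le_of_abs_le hcs
    have heq : ε / (2 * ‖x‖) * ‖x‖ ^ 2 = ‖x‖ * (ε / 2) := by
      field_simp
    rw [heq]
    linarith
end
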